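/- Let σ ∈ I_{n,k}^max and let ω ∈ I_{n,k} with ω ≤ σ and ω ≠ σ. Then: (a) for every arc (a,b) ∈ ω and fixed point f of ω with a<f<b, at least one of ω⁻_{(a,b)}(a,f) and ω⁻_{(a,b)}(f,b) is ≤ σ; (b) for every pair of crossing arcs (a,c),(b,d) ∈ ω with a<b<c<d, at least one of ω⁻_{(a,c),(b,d)}(a,b)(c,d) and ω⁻_{(a,c),(b,d)}(a,d)(b,c) is ≤ σ. Equivalently, for every pair of predecessors of ω arising from the same elementary move data, at least one belongs to G_σ = {υ ∈ I_{n,k} : υ ≤ σ}. -/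

import Mathlib

/- Link patterns: an involution in `I_{n,k}` (k disjoint 2-cycles in S_n) is identified
with its set of arcs, a finset of pairs `(i,j)` with `1 ≤ i < j ≤ n`, pairwise disjoint
endpoints, of cardinality `k`. -/

attribute [local instance] Classical.propDecidable

namespace LinkPatterns

/-- `σ` is a link pattern on the points `1,…,n`: each arc `(i,j)` satisfies
`1 ≤ i < j ≤ n` and distinct arcs have pairwise distinct endpoints. -/
def IsLinkPattern (n : ℕ) (σ : Finset (ℕ × ℕ)) : Prop :=
  (∀ p ∈ σ, 1 ≤ p.1 ∧ p.1 < p.2 ∧ p.2 ≤ n) ∧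
  (∀ p ∈ σ, ∀ q ∈ σ, p ≠ q → p.1 ≠ q.1 ∧ p.1 ≠ q.2 ∧ p.2 ≠ q.1 ∧ p.2 ≠ q.2)

/-- The fixed points `σ⁰` of a link pattern on `1,…,n`. -/
noncomputable def fixedPts (n : ℕ) (σ : Finset (ℕ × ℕ)) : Finset ℕ :=
  (Finset.Icc 1 n).filter (fun f => ∀ p ∈ σ, p.1 ≠ f ∧ p.2 ≠ f)

/-- `c(σ)`: the number of crossings, i.e. of pairs of arcs `(i,j),(i',j')` with
`i < i' < j < j'`. -/
noncomputable def crossings (σ : Finset (ℕ × ℕ)) : ℕ :=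
  ((σ ×ˢ σ).filter (fun q => q.1.1 < q.2.1 ∧ q.2.1 < q.1.2 ∧ q.1.2 < q.2.2)).card

/-- `b(σ)`: the number of pairs (arc, fixed point) with the fixed point strictly
under the arc. -/
noncomputable def bridges (n : ℕ) (σ : Finset (ℕ × ℕ)) : ℕ :=
  ((σ ×ˢ fixedPts n σ).filter (fun q => q.1.1 < q.2 ∧ q.2 < q.1.2)).card

/-- `R_{[a,b]}(σ)`: the number of arcs `(i,j) ∈ σ` with `a ≤ i < j ≤ b`. -/
noncomputable def RInt (σ : Finset (ℕ × ℕ)) (a b : ℕ) : ℕ :=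
  (σ.filter (fun p => a ≤ p.1 ∧ p.2 ≤ b)).card

/-- The partial order: `υ ≤ σ` iff `R_{[a,b]}(υ) ≤ R_{[a,b]}(σ)` for all `1 ≤ a < b ≤ n`. -/
def lpLE (n : ℕ) (υ σ : Finset (ℕ × ℕ)) : Prop :=
  ∀ a b : ℕ, 1 ≤ a → a < b → b ≤ n → RInt υ a b ≤ RInt σ a b

/-- `σ'` is a predecessor of `σ`, i.e. is obtained from `σ` by an elementary move
forward (of first or second type). -/
def IsPredecessor (n : ℕ) (σ' σ : Finset (ℕ × ℕ)) : Prop :=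
  (∃ i j f : ℕ, (i, j) ∈ σ ∧ f ∈ fixedPts n σ ∧ i < f ∧ f < j ∧
    (σ' = insert (i, f) (σ.erase (i, j)) ∨ σ' = insert (f, j) (σ.erase (i, j)))) ∨
  (∃ i j l m : ℕ, (i, j) ∈ σ ∧ (l, m) ∈ σ ∧ i < l ∧ l < j ∧ j < m ∧
    (σ' = insert (i, l) (insert (j, m) ((σ.erase (i, j)).erase (l, m))) ∨
     σ' = insert (i, m) (insert (l, j) ((σ.erase (i, j)).erase (l, m)))))

/-- All finsets of pairs of points of `1,…,n`: an ambient finite set in which all link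
patterns on `1,…,n` live. -/
noncomputable def allSub (n : ℕ) : Finset (Finset (ℕ × ℕ)) :=
  (Finset.Icc 1 n ×ˢ Finset.Icc 1 n).powerset

/-- `a_{σ,υ}`: the number of `ω ∈ I_{n,k}` with `ω ≤ σ` such that `ω` is a predecessor
of `υ` or `υ` is a predecessor of `ω` (the number of edges at `υ` in the graph `G_σ`). -/
noncomputable def aNum (n k : ℕ) (σ υ : Finset (ℕ × ℕ)) : ℕ :=
  ((allSub n).filter (fun ω => IsLinkPattern n ω ∧ ω.card = k ∧ lpLE n ω σ ∧
    (IsPredecessor n ω υ ∨ IsPredecessor n υ ω))).card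

/-- `p_σ := C(n-k,2) - C(n-2k,2) - b(σ) - c(σ)`. -/
noncomputable def pNum (n k : ℕ) (σ : Finset (ℕ × ℕ)) : ℕ :=
  Nat.choose (n - k) 2 - Nat.choose (n - 2 * k) 2 - bridges n σ - crossings σ

/-- `σ ∈ I_{n,k}^max`: a link pattern with no crossings and no fixed point under an arc. -/
def IsMaximal (n : ℕ) (σ : Finset (ℕ × ℕ)) : Prop :=
  IsLinkPattern n σ ∧ bridges n σ = 0 ∧ crossings σ = 0

/-- `υ` is a singular point of `σ`: `a_{σ,υ} > p_σ`. -/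
def IsSingularPt (n k : ℕ) (σ υ : Finset (ℕ × ℕ)) : Prop :=
  pNum n k σ < aNum n k σ υ

/-- `υ ∈ Sing(σ)`: `υ ∈ I_{n,k}`, `υ ≤ σ`, `υ` is a singular point of `σ`, and `υ` is
maximal w.r.t. `≤` among the singular points of `σ`. -/
def InSing (n k : ℕ) (σ υ : Finset (ℕ × ℕ)) : Prop :=
  IsLinkPattern n υ ∧ υ.card = k ∧ lpLE n υ σ ∧ IsSingularPt n k σ υ ∧
  ∀ ω : Finset (ℕ × ℕ), IsLinkPattern n ω → ω.card = k → lpLE n ω σ →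
    IsSingularPt n k σ ω → lpLE n υ ω → ω = υ

/-- `τ*(σ)`: the set of minimal arcs `(i,i+1)` of `σ`. -/
noncomputable def tauStar (σ : Finset (ℕ × ℕ)) : Finset (ℕ × ℕ) :=
  σ.filter (fun p => p.2 = p.1 + 1)

/-- `ρ(σ)` for `σ ∈ I_{n,k}^max`. -/
noncomputable def rho (n : ℕ) (σ : Finset (ℕ × ℕ)) : ℕ :=
  if 1 ∈ fixedPts n σ ∧ n ∈ fixedPts n σ then (tauStar σ).card + 2
  else if 1 ∈ fixedPts n σ ∨ n ∈ fixedPts n σ ∨ (1, n) ∈ σ then (tauStar σ).card + 1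
  else (tauStar σ).card

/-- The extraction `σ̃^{(i,i+1)}`: delete the arc `(i,i+1)` together with the points
`i, i+1` and renumber the remaining points. -/
noncomputable def extract (i : ℕ) (σ : Finset (ℕ × ℕ)) : Finset (ℕ × ℕ) :=
  (σ.erase (i, i + 1)).image
    (fun p => (if p.1 < i then p.1 else p.1 - 2, if p.2 < i then p.2 else p.2 - 2))

/-- `σ₊ₐ`: shift every point of `σ` by `a`. -/
noncomputable def shiftBy (a : ℕ) (σ : Finset (ℕ × ℕ)) : Finset (ℕ × ℕ) :=
  σ.image (fun p => (p.1 + a, p.2 + a))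

/-- The projection `π_{a,b}(σ)` renumbered to a link pattern on `1,…,b-a+1`. -/
noncomputable def proj (a b : ℕ) (σ : Finset (ℕ × ℕ)) : Finset (ℕ × ℕ) :=
  (σ.filter (fun p => a ≤ p.1 ∧ p.2 ≤ b)).image
    (fun p => (p.1 - (a - 1), p.2 - (a - 1)))

/-- The arc `p` lies over the arc `(i,j)`: `p.1 < i < j < p.2`. -/
def ArcOver (p : ℕ × ℕ) (i j : ℕ) : Prop := p.1 < i ∧ j < p.2

/-- The pair of arcs `(i,j),(i',j')` of `σ` is admissible at `[1,n]`. -/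
def AdmissiblePair (n : ℕ) (σ : Finset (ℕ × ℕ)) (i j i' j' : ℕ) : Prop :=
  (i, j) ∈ σ ∧ (i', j') ∈ σ ∧
  1 < i ∧ i < j ∧ j < i' ∧ i' < j' ∧ j' < n ∧
  1 ∈ fixedPts n σ ∧ n ∈ fixedPts n σ ∧
  (∀ f ∈ fixedPts n σ, f ≠ 1 → f ≠ n → j ≤ f ∧ f ≤ i') ∧
  (∀ p ∈ σ, ¬(p.1 < i ∧ i < p.2 ∧ p.2 < j) ∧ ¬(i < p.1 ∧ p.1 < j ∧ j < p.2) ∧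
            ¬(p.1 < i' ∧ i' < p.2 ∧ p.2 < j') ∧ ¬(i' < p.1 ∧ p.1 < j' ∧ j' < p.2)) ∧
  (∀ p ∈ σ, (ArcOver p i j ∨ ArcOver p i' j') → (p.1 < i ∧ j' < p.2)) ∧
  (∀ p ∈ σ, ∀ q ∈ σ, (p.1 < i ∧ j' < p.2) → (q.1 < i ∧ j' < q.2) →
      p.1 < q.1 → q.2 < p.2) ∧
  ((fixedPts n σ).filter (fun f => j ≤ f ∧ f ≤ i')).card *
    (σ.filter (fun p => p.1 < i ∧ j' < p.2)).card = 0

noncomputable def outCt (τ : Finset (ℕ × ℕ)) (s t : ℕ) : ℕ :=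
  ((Finset.Icc s t).filter (fun z => ∃ p ∈ τ,
    (p.1 = z ∧ ¬(s ≤ p.2 ∧ p.2 ≤ t)) ∨ (p.2 = z ∧ ¬(s ≤ p.1 ∧ p.1 ≤ t)))).card

noncomputable def fixCt (τ : Finset (ℕ × ℕ)) (s t : ℕ) : ℕ :=
  ((Finset.Icc s t).filter (fun z => ∀ p ∈ τ, p.1 ≠ z ∧ p.2 ≠ z)).card

/-- arcs from strictly inside the middle zone `[xs,y]` to outside `[x,ys]` -/
noncomputable def escCt (τ : Finset (ℕ × ℕ)) (x xs y ys : ℕ) : ℕ :=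
  (τ.filter (fun p => (xs ≤ p.1 ∧ p.1 ≤ y ∧ ¬(x ≤ p.2 ∧ p.2 ≤ ys)) ∨
      (xs ≤ p.2 ∧ p.2 ≤ y ∧ ¬(x ≤ p.1 ∧ p.1 ≤ ys)))).card

lemma arc_unique {n : ℕ} {τ : Finset (ℕ × ℕ)} (hτ : IsLinkPattern n τ)
    {p q : ℕ × ℕ} (hp : p ∈ τ) (hq : q ∈ τ)
    (h : p.1 = q.1 ∨ p.1 = q.2 ∨ p.2 = q.1 ∨ p.2 = q.2) : p = q := by
  by_contra hne
  obtain ⟨h1, h2, h3, h4⟩ := hτ.2 p hp q hq hne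
  tauto

lemma RInt_eq_sum (τ : Finset (ℕ × ℕ)) (s t : ℕ) :
    RInt τ s t = ∑ p ∈ τ, if s ≤ p.1 ∧ p.2 ≤ t then 1 else 0 :=
  Finset.card_filter _ _

lemma RInt_zero {n : ℕ} {τ : Finset (ℕ × ℕ)} (hτ : IsLinkPattern n τ) {s t : ℕ}
    (h : ¬ s < t) : RInt τ s t = 0 := by
  unfold RInt
  rw [Finset.card_eq_zero, Finset.filter_eq_empty_iff]
  rintro p hp ⟨h1, h2⟩
  have := (hτ.1 p hp).2.1
  omega

/-- The point-count identity `|[s,t]| = 2 R(s,t) + out(s,t) + fix(s,t)`. -/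
lemma point_count {n : ℕ} {τ : Finset (ℕ × ℕ)} (hτ : IsLinkPattern n τ) (s t : ℕ) :
    (Finset.Icc s t).card = 2 * RInt τ s t + outCt τ s t + fixCt τ s t := by
  classical
  have h1 : ((Finset.Icc s t).filter
        (fun z => ∃ p ∈ τ, (p.1 = z ∨ p.2 = z) ∧ s ≤ p.1 ∧ p.2 ≤ t)).card
      + ((Finset.Icc s t).filter
        (fun z => ¬ ∃ p ∈ τ, (p.1 = z ∨ p.2 = z) ∧ s ≤ p.1 ∧ p.2 ≤ t)).card
      = (Finset.Icc s t).card :=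
    Finset.card_filter_add_card_filter_not _
  have h2 : (((Finset.Icc s t).filter
        (fun z => ¬ ∃ p ∈ τ, (p.1 = z ∨ p.2 = z) ∧ s ≤ p.1 ∧ p.2 ≤ t)).filter
        (fun z => ∃ p ∈ τ,
          (p.1 = z ∧ ¬(s ≤ p.2 ∧ p.2 ≤ t)) ∨ (p.2 = z ∧ ¬(s ≤ p.1 ∧ p.1 ≤ t)))).card
      + (((Finset.Icc s t).filter
        (fun z => ¬ ∃ p ∈ τ, (p.1 = z ∨ p.2 = z) ∧ s ≤ p.1 ∧ p.2 ≤ t)).filter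
        (fun z => ¬ ∃ p ∈ τ,
          (p.1 = z ∧ ¬(s ≤ p.2 ∧ p.2 ≤ t)) ∨ (p.2 = z ∧ ¬(s ≤ p.1 ∧ p.1 ≤ t)))).card
      = ((Finset.Icc s t).filter
        (fun z => ¬ ∃ p ∈ τ, (p.1 = z ∨ p.2 = z) ∧ s ≤ p.1 ∧ p.2 ≤ t)).card :=
    Finset.card_filter_add_card_filter_not _
  have e1 : ((Finset.Icc s t).filter
        (fun z => ¬ ∃ p ∈ τ, (p.1 = z ∨ p.2 = z) ∧ s ≤ p.1 ∧ p.2 ≤ t)).filter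
        (fun z => ∃ p ∈ τ,
          (p.1 = z ∧ ¬(s ≤ p.2 ∧ p.2 ≤ t)) ∨ (p.2 = z ∧ ¬(s ≤ p.1 ∧ p.1 ≤ t)))
      = (Finset.Icc s t).filter (fun z => ∃ p ∈ τ,
          (p.1 = z ∧ ¬(s ≤ p.2 ∧ p.2 ≤ t)) ∨ (p.2 = z ∧ ¬(s ≤ p.1 ∧ p.1 ≤ t))) := by
    rw [Finset.filter_filter]
    apply Finset.filter_congr
    intro z hz
    constructor
    · rintro ⟨_, h⟩; exact h
    · rintro ⟨p, hp, hcase⟩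
      refine ⟨?_, ⟨p, hp, hcase⟩⟩
      rintro ⟨q, hq, hzq, hq1, hq2⟩
      have hz1 : p.1 = z ∨ p.2 = z := by tauto
      have hpq : p = q := arc_unique hτ hp hq (by omega)
      subst hpq
      have hlt := (hτ.1 p hp).2.1
      rcases hcase with ⟨h, hno⟩ | ⟨h, hno⟩ <;> exact hno (by constructor <;> omega)
  have e2 : ((Finset.Icc s t).filter
        (fun z => ¬ ∃ p ∈ τ, (p.1 = z ∨ p.2 = z) ∧ s ≤ p.1 ∧ p.2 ≤ t)).filter
        (fun z => ¬ ∃ p ∈ τ,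
          (p.1 = z ∧ ¬(s ≤ p.2 ∧ p.2 ≤ t)) ∨ (p.2 = z ∧ ¬(s ≤ p.1 ∧ p.1 ≤ t)))
      = (Finset.Icc s t).filter (fun z => ∀ p ∈ τ, p.1 ≠ z ∧ p.2 ≠ z) := by
    rw [Finset.filter_filter]
    apply Finset.filter_congr
    intro z hz
    rw [Finset.mem_Icc] at hz
    constructor
    · rintro ⟨hnin, hnout⟩ p hp
      constructor
      · intro hh1
        by_cases hins : s ≤ p.1 ∧ p.2 ≤ t
        · exact hnin ⟨p, hp, Or.inl hh1, hins⟩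
        · exact hnout ⟨p, hp, Or.inl ⟨hh1, fun hc => hins ⟨by omega, hc.2⟩⟩⟩
      · intro hh2
        have hlt := (hτ.1 p hp).2.1
        by_cases hins : s ≤ p.1 ∧ p.2 ≤ t
        · exact hnin ⟨p, hp, Or.inr hh2, hins⟩
        · exact hnout ⟨p, hp, Or.inr ⟨hh2, fun hc => hins ⟨hc.1, by omega⟩⟩⟩
    · rintro hfix
      constructor
      · rintro ⟨p, hp, hor, _⟩
        obtain ⟨n1, n2⟩ := hfix p hp
        tauto
      · rintro ⟨p, hp, hor⟩
        obtain ⟨n1, n2⟩ := hfix p hp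
        tauto
  have e3 : (Finset.Icc s t).filter
        (fun z => ∃ p ∈ τ, (p.1 = z ∨ p.2 = z) ∧ s ≤ p.1 ∧ p.2 ≤ t)
      = (τ.filter (fun p => s ≤ p.1 ∧ p.2 ≤ t)).biUnion (fun p => {p.1, p.2}) := by
    ext z
    simp only [Finset.mem_filter, Finset.mem_Icc, Finset.mem_biUnion, Finset.mem_insert,
      Finset.mem_singleton]
    constructor
    · rintro ⟨_, p, hp, hor, hbd⟩
      exact ⟨p, ⟨hp, hbd⟩, by tauto⟩
    · rintro ⟨p, ⟨hp, hbd⟩, hor⟩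
      have := (hτ.1 p hp).2.1
      exact ⟨by omega, p, hp, by tauto, hbd⟩
  have e4 : ((τ.filter (fun p => s ≤ p.1 ∧ p.2 ≤ t)).biUnion
        (fun p => ({p.1, p.2} : Finset ℕ))).card = 2 * RInt τ s t := by
    rw [Finset.card_biUnion]
    · have : ∀ p ∈ τ.filter (fun p => s ≤ p.1 ∧ p.2 ≤ t),
          ({p.1, p.2} : Finset ℕ).card = 2 := by
        intro p hp
        simp only [Finset.mem_filter] at hp
        have := (hτ.1 p hp.1).2.1
        rw [Finset.card_pair (by omega)]
      rw [Finset.sum_congr rfl this, Finset.sum_const, smul_eq_mul, RInt, Nat.mul_comm]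
    · intro p hp q hq hne
      simp only [Finset.mem_coe, Finset.mem_filter] at hp hq
      obtain ⟨d1, d2, d3, d4⟩ := hτ.2 p hp.1 q hq.1 hne
      simp only [Finset.disjoint_left, Finset.mem_insert, Finset.mem_singleton]
      rintro z (rfl | rfl) <;> omega
  rw [outCt, fixCt]
  rw [e1, e2] at h2
  rw [e3, e4] at h1
  omega

/-- `outCt` as a count of arcs with exactly one endpoint in `[s,t]`. -/
lemma outCt_eq_arcs {n : ℕ} {τ : Finset (ℕ × ℕ)} (hτ : IsLinkPattern n τ) (s t : ℕ) :
    outCt τ s t = (τ.filter (fun p =>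
      ((s ≤ p.1 ∧ p.1 ≤ t) ∧ ¬(s ≤ p.2 ∧ p.2 ≤ t)) ∨
      ((s ≤ p.2 ∧ p.2 ≤ t) ∧ ¬(s ≤ p.1 ∧ p.1 ≤ t)))).card := by
  classical
  rw [outCt]
  symm
  apply Finset.card_bij (fun p _ => if s ≤ p.1 ∧ p.1 ≤ t then p.1 else p.2)
  · intro p hp
    simp only [Finset.mem_filter] at hp
    obtain ⟨hpτ, hcase⟩ := hp
    by_cases h1 : s ≤ p.1 ∧ p.1 ≤ t
    · rw [if_pos h1]
      simp only [Finset.mem_filter, Finset.mem_Icc]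
      have hno : ¬(s ≤ p.2 ∧ p.2 ≤ t) := by tauto
      exact ⟨h1, p, hpτ, Or.inl ⟨rfl, hno⟩⟩
    · rw [if_neg h1]
      simp only [Finset.mem_filter, Finset.mem_Icc]
      have h2 : s ≤ p.2 ∧ p.2 ≤ t := by tauto
      exact ⟨h2, p, hpτ, Or.inr ⟨rfl, h1⟩⟩
  · intro p hp q hq heq
    simp only [Finset.mem_filter] at hp hq
    apply arc_unique hτ hp.1 hq.1
    by_cases h1 : s ≤ p.1 ∧ p.1 ≤ t <;> by_cases h2 : s ≤ q.1 ∧ q.1 ≤ t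
    · rw [if_pos h1, if_pos h2] at heq; omega
    · rw [if_pos h1, if_neg h2] at heq; omega
    · rw [if_neg h1, if_pos h2] at heq; omega
    · rw [if_neg h1, if_neg h2] at heq; omega
  · intro z hz
    simp only [Finset.mem_filter, Finset.mem_Icc] at hz
    obtain ⟨hzb, p, hp, hcase⟩ := hz
    rcases hcase with ⟨he, hno⟩ | ⟨he, hno⟩
    · refine ⟨p, ?_, ?_⟩
      · simp only [Finset.mem_filter]
        exact ⟨hp, Or.inl ⟨by omega, hno⟩⟩
      · rw [if_pos (by omega)]; exact he
    · refine ⟨p, ?_, ?_⟩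
      · simp only [Finset.mem_filter]
        exact ⟨hp, Or.inr ⟨by omega, hno⟩⟩
      · rw [if_neg (by tauto)]; exact he

/-- Modularity with straddle term. -/
lemma mod_identity (τ : Finset (ℕ × ℕ)) {x xs y ys : ℕ} (h1 : x ≤ xs) (h2 : y ≤ ys) :
    RInt τ x ys + RInt τ xs y
      = RInt τ x y + RInt τ xs ys
        + (τ.filter (fun p => x ≤ p.1 ∧ p.1 < xs ∧ y < p.2 ∧ p.2 ≤ ys)).card := by
  classical
  unfold RInt
  rw [Finset.card_filter, Finset.card_filter, Finset.card_filter, Finset.card_filter,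
    Finset.card_filter, ← Finset.sum_add_distrib, ← Finset.sum_add_distrib,
    ← Finset.sum_add_distrib]
  apply Finset.sum_congr rfl
  intro p _
  split_ifs <;> omega

/-- Zone identity for fixed-point counts. -/
lemma fix_zone (τ : Finset (ℕ × ℕ)) {x xs y ys : ℕ}
    (h1 : x < xs) (h2 : xs ≤ y) (h3 : y < ys) :
    fixCt τ x y + fixCt τ xs ys
      = fixCt τ x (xs - 1) + fixCt τ (y + 1) ys + 2 * fixCt τ xs y := by
  classical
  have transport : ∀ s t : ℕ, x ≤ s → t ≤ ys →
      fixCt τ s t = (((Finset.Icc x ys).filter (fun z => ∀ p ∈ τ, p.1 ≠ z ∧ p.2 ≠ z)).filter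
        (fun z => s ≤ z ∧ z ≤ t)).card := by
    intro s t hs ht
    rw [fixCt]
    congr 1
    rw [Finset.filter_filter]
    ext z
    simp only [Finset.mem_filter, Finset.mem_Icc]
    constructor
    · rintro ⟨⟨hz1, hz2⟩, hP⟩
      exact ⟨⟨by omega, by omega⟩, hP, by omega, by omega⟩
    · rintro ⟨⟨hz1, hz2⟩, hP, hs', ht'⟩
      exact ⟨⟨hs', ht'⟩, hP⟩
  rw [transport x y le_rfl (by omega), transport xs ys (by omega) le_rfl,
    transport x (xs - 1) le_rfl (by omega), transport (y+1) ys (by omega) le_rfl,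
    transport xs y (by omega) (by omega)]
  rw [Finset.card_filter, Finset.card_filter, Finset.card_filter, Finset.card_filter,
    Finset.card_filter]
  rw [Finset.mul_sum, ← Finset.sum_add_distrib, ← Finset.sum_add_distrib,
    ← Finset.sum_add_distrib]
  apply Finset.sum_congr rfl
  intro z hz
  simp only [Finset.mem_filter, Finset.mem_Icc] at hz
  split_ifs <;> omega


/-- Zone identity for out-counts. -/
lemma out_zone {n : ℕ} {τ : Finset (ℕ × ℕ)} (hτ : IsLinkPattern n τ) {x xs y ys : ℕ}
    (h1 : x < xs) (h2 : xs ≤ y) (h3 : y < ys) :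
    outCt τ x y + outCt τ xs ys
      = outCt τ x (xs - 1) + outCt τ (y + 1) ys + 2 * escCt τ x xs y ys := by
  classical
  rw [outCt_eq_arcs hτ, outCt_eq_arcs hτ, outCt_eq_arcs hτ, outCt_eq_arcs hτ, escCt]
  rw [Finset.card_filter, Finset.card_filter, Finset.card_filter, Finset.card_filter,
    Finset.card_filter]
  rw [Finset.mul_sum, ← Finset.sum_add_distrib, ← Finset.sum_add_distrib,
    ← Finset.sum_add_distrib]
  apply Finset.sum_congr rfl
  intro p _
  split_ifs <;> omega

/-- Master contradiction lemma: if `σ` is maximal, `ω` is dominated by `σ`, and there are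
two "tight" intervals `[x,y]`, `[xs,ys]` in the configuration of an elementary move
(an `ω`-arc `(α,β)` straddling both cuts, and a point `g` of the middle zone which is
`ω`-free inside `[x,ys]`), we get a contradiction. -/
lemma master {n x α xs g y β ys : ℕ} {σ ω : Finset (ℕ × ℕ)}
    (hσLP : IsLinkPattern n σ) (hbr : bridges n σ = 0) (hcr : crossings σ = 0)
    (hω : IsLinkPattern n ω)
    (hx1 : 1 ≤ x) (hyn : ys ≤ n)
    (hxa : x ≤ α) (hax : α < xs) (hxg : xs ≤ g) (hgy : g ≤ y) (hyb : y < β) (hbys : β ≤ ys)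
    (harc : (α, β) ∈ ω)
    (hg : ∀ p ∈ ω, (p.1 = g → ¬(x ≤ p.2 ∧ p.2 ≤ ys)) ∧ (p.2 = g → ¬(x ≤ p.1 ∧ p.1 ≤ ys)))
    (hR : ∀ s t : ℕ, 1 ≤ s → t ≤ n → RInt ω s t ≤ RInt σ s t)
    (heqI : RInt ω x y = RInt σ x y) (heqJ : RInt ω xs ys = RInt σ xs ys) : False := by
  classical
  -- Step 1: σ has a straddling arc (u,v) with x ≤ u < xs, y < v ≤ ys.
  have hmodσ := mod_identity σ (show x ≤ xs by omega) (show y ≤ ys by omega)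
  have hmodω := mod_identity ω (show x ≤ xs by omega) (show y ≤ ys by omega)
  have hstrω : 1 ≤ (ω.filter (fun p => x ≤ p.1 ∧ p.1 < xs ∧ y < p.2 ∧ p.2 ≤ ys)).card := by
    apply Finset.card_pos.2
    exact ⟨(α, β), Finset.mem_filter.2 ⟨harc, by constructor <;> omega⟩⟩
  have hRL : RInt ω x ys ≤ RInt σ x ys := hR x ys hx1 hyn
  have hRM : RInt ω xs y ≤ RInt σ xs y := hR xs y (by omega) (by omega)
  have hstrσ : 1 ≤ (σ.filter (fun p => x ≤ p.1 ∧ p.1 < xs ∧ y < p.2 ∧ p.2 ≤ ys)).card := by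
    omega
  obtain ⟨uv, huv⟩ := Finset.card_pos.1 hstrσ
  rw [Finset.mem_filter] at huv
  obtain ⟨huvσ, hu1, hu2, hv1, hv2⟩ := huv
  -- Step 2: point counts and zone identities.
  have PIσ := point_count hσLP x y
  have PIω := point_count hω x y
  have PJσ := point_count hσLP xs ys
  have PJω := point_count hω xs ys
  have PD1σ := point_count hσLP x (xs - 1)
  have PD1ω := point_count hω x (xs - 1)
  have PD2σ := point_count hσLP (y + 1) ys
  have PD2ω := point_count hω (y + 1) ys
  have hRD1 : RInt ω x (xs - 1) ≤ RInt σ x (xs - 1) := hR x (xs - 1) hx1 (by omega)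
  have hRD2 : RInt ω (y + 1) ys ≤ RInt σ (y + 1) ys := hR (y + 1) ys (by omega) hyn
  have zOσ := out_zone hσLP (show x < xs by omega) (show xs ≤ y by omega)
    (show y < ys by omega)
  have zOω := out_zone hω (show x < xs by omega) (show xs ≤ y by omega)
    (show y < ys by omega)
  have zFσ := fix_zone σ (show x < xs by omega) (show xs ≤ y by omega)
    (show y < ys by omega)
  have zFω := fix_zone ω (show x < xs by omega) (show xs ≤ y by omega)
    (show y < ys by omega)
  -- Step 3: ω has an escape or a fixed point at g in the middle zone.
  have hgM : 1 ≤ escCt ω x xs y ys + fixCt ω xs y := by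
    by_cases hfree : ∀ p ∈ ω, p.1 ≠ g ∧ p.2 ≠ g
    · have : 1 ≤ fixCt ω xs y := by
        apply Finset.card_pos.2
        exact ⟨g, Finset.mem_filter.2 ⟨Finset.mem_Icc.2 ⟨hxg, hgy⟩, hfree⟩⟩
      omega
    · push_neg at hfree
      obtain ⟨p, hp, hor⟩ := hfree
      have hpg := hg p hp
      have : 1 ≤ escCt ω x xs y ys := by
        apply Finset.card_pos.2
        refine ⟨p, Finset.mem_filter.2 ⟨hp, ?_⟩⟩
        by_cases h1 : p.1 = g
        · exact Or.inl ⟨by omega, by omega, hpg.1 h1⟩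
        · have h2 : p.2 = g := by tauto
          exact Or.inr ⟨by omega, by omega, hpg.2 h2⟩
      omega
  -- Step 4: hence σ has an escape or a fixed point in the middle zone.
  have key : 1 ≤ escCt σ x xs y ys + fixCt σ xs y := by omega
  -- Step 5: both are impossible since σ is maximal.
  by_cases hfix : 1 ≤ fixCt σ xs y
  · obtain ⟨z, hz⟩ := Finset.card_pos.1 hfix
    rw [Finset.mem_filter, Finset.mem_Icc] at hz
    obtain ⟨⟨hz1, hz2⟩, hzfix⟩ := hz
    have hmem : (uv, z) ∈ (σ ×ˢ fixedPts n σ).filter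
        (fun q => q.1.1 < q.2 ∧ q.2 < q.1.2) := by
      rw [Finset.mem_filter, Finset.mem_product]
      refine ⟨⟨huvσ, ?_⟩, by dsimp only; omega⟩
      rw [fixedPts, Finset.mem_filter, Finset.mem_Icc]
      exact ⟨⟨by omega, by omega⟩, hzfix⟩
    rw [bridges, Finset.card_eq_zero] at hbr
    rw [hbr] at hmem
    exact absurd hmem (Finset.notMem_empty _)
  · have hesc : 1 ≤ escCt σ x xs y ys := by omega
    rw [escCt] at hesc
    obtain ⟨p, hpmem⟩ := Finset.card_pos.1 hesc
    obtain ⟨hpσ, hcase⟩ := Finset.mem_filter.1 hpmem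
    have hplt := (hσLP.1 p hpσ).2.1
    rw [crossings, Finset.card_eq_zero] at hcr
    rcases hcase with ⟨hA1, hA2, hA3⟩ | ⟨hB1, hB2, hB3⟩
    · -- p.1 in the middle zone, p.2 > ys : (uv, p) is a crossing
      have hp2 : ys < p.2 := by omega
      have hmem : (uv, p) ∈ (σ ×ˢ σ).filter
          (fun q => q.1.1 < q.2.1 ∧ q.2.1 < q.1.2 ∧ q.1.2 < q.2.2) := by
        rw [Finset.mem_filter, Finset.mem_product]
        exact ⟨⟨huvσ, hpσ⟩, by dsimp only; omega⟩
      rw [hcr] at hmem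
      exact absurd hmem (Finset.notMem_empty _)
    · -- p.2 in the middle zone, p.1 < x : (p, uv) is a crossing
      have hp1 : p.1 < x := by omega
      have hmem : (p, uv) ∈ (σ ×ˢ σ).filter
          (fun q => q.1.1 < q.2.1 ∧ q.2.1 < q.1.2 ∧ q.1.2 < q.2.2) := by
        rw [Finset.mem_filter, Finset.mem_product]
        exact ⟨⟨hpσ, huvσ⟩, by dsimp only; omega⟩
      rw [hcr] at hmem
      exact absurd hmem (Finset.notMem_empty _)

lemma fixedPts_not_endpoint {n f : ℕ} {ω : Finset (ℕ × ℕ)} (hf : f ∈ fixedPts n ω) :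
    ∀ p ∈ ω, p.1 ≠ f ∧ p.2 ≠ f := (Finset.mem_filter.1 hf).2

/-- Witness extraction for a failing type-(a) predecessor. -/
lemma witness_a {n a b f : ℕ} {σ ω : Finset (ℕ × ℕ)}
    (hσLP : IsLinkPattern n σ) (hω : IsLinkPattern n ω)
    (hab : (a, b) ∈ ω) (hf : ∀ p ∈ ω, p.1 ≠ f ∧ p.2 ≠ f) (haf : a < f) (hfb : f < b)
    (hle : lpLE n ω σ)
    (hfail : ¬ lpLE n (insert (a, f) (ω.erase (a, b))) σ) :
    ∃ s t : ℕ, 1 ≤ s ∧ t ≤ n ∧ s ≤ a ∧ f ≤ t ∧ t < b ∧ RInt ω s t = RInt σ s t := by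
  rw [lpLE] at hfail
  push_neg at hfail
  obtain ⟨s, t, hs1, hst, htn, hgt⟩ := hfail
  have haf_not : (a, f) ∉ ω.erase (a, b) := by
    intro hmem
    exact (hf _ (Finset.mem_of_mem_erase hmem)).2 rfl
  have hab_er : (a, b) ∈ ω := hab
  have hsum : RInt (insert (a, f) (ω.erase (a, b))) s t
        + (if s ≤ a ∧ b ≤ t then 1 else 0)
      = RInt ω s t + (if s ≤ a ∧ f ≤ t then 1 else 0) := by
    rw [RInt_eq_sum, RInt_eq_sum, Finset.sum_insert haf_not]
    have h2 := Finset.sum_erase_add ω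
      (fun p => if s ≤ p.1 ∧ p.2 ≤ t then 1 else 0) hab_er
    dsimp only at h2 ⊢
    omega
  have hωσ : RInt ω s t ≤ RInt σ s t := hle s t hs1 hst htn
  have hmain : (s ≤ a ∧ f ≤ t) ∧ ¬(s ≤ a ∧ b ≤ t) ∧ RInt ω s t = RInt σ s t := by
    by_cases h1 : s ≤ a ∧ b ≤ t <;> by_cases h2 : s ≤ a ∧ f ≤ t
    · rw [if_pos h1, if_pos h2] at hsum; omega
    · rw [if_pos h1, if_neg h2] at hsum; omega
    · rw [if_neg h1, if_pos h2] at hsum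
      exact ⟨h2, h1, by omega⟩
    · rw [if_neg h1, if_neg h2] at hsum; omega
  exact ⟨s, t, hs1, htn, hmain.1.1, hmain.1.2, by have := hmain.2.1; omega, hmain.2.2⟩

/-- Witness extraction for the other failing type-(a) predecessor. -/
lemma witness_a2 {n a b f : ℕ} {σ ω : Finset (ℕ × ℕ)}
    (hab : (a, b) ∈ ω) (hf : ∀ p ∈ ω, p.1 ≠ f ∧ p.2 ≠ f) (haf : a < f) (hfb : f < b)
    (hle : lpLE n ω σ)
    (hfail : ¬ lpLE n (insert (f, b) (ω.erase (a, b))) σ) :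
    ∃ s t : ℕ, 1 ≤ s ∧ t ≤ n ∧ a < s ∧ s ≤ f ∧ b ≤ t ∧ RInt ω s t = RInt σ s t := by
  rw [lpLE] at hfail
  push_neg at hfail
  obtain ⟨s, t, hs1, hst, htn, hgt⟩ := hfail
  have hfb_not : (f, b) ∉ ω.erase (a, b) := by
    intro hmem
    exact (hf _ (Finset.mem_of_mem_erase hmem)).1 rfl
  have hsum : RInt (insert (f, b) (ω.erase (a, b))) s t
        + (if s ≤ a ∧ b ≤ t then 1 else 0)
      = RInt ω s t + (if s ≤ f ∧ b ≤ t then 1 else 0) := by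
    rw [RInt_eq_sum, RInt_eq_sum, Finset.sum_insert hfb_not]
    have h2 := Finset.sum_erase_add ω
      (fun p => if s ≤ p.1 ∧ p.2 ≤ t then 1 else 0) hab
    dsimp only at h2 ⊢
    omega
  have hωσ : RInt ω s t ≤ RInt σ s t := hle s t hs1 hst htn
  refine ⟨s, t, hs1, htn, ?_⟩
  split_ifs at hsum <;> omega

/-- Witness extraction for a failing type-(b) uncrossing predecessor. -/
lemma witness_b1 {n a b c d : ℕ} {σ ω : Finset (ℕ × ℕ)} (hω : IsLinkPattern n ω)
    (hac : (a, c) ∈ ω) (hbd : (b, d) ∈ ω) (h1 : a < b) (h2 : b < c) (h3 : c < d)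
    (hle : lpLE n ω σ)
    (hfail : ¬ lpLE n (insert (a, b) (insert (c, d) ((ω.erase (a, c)).erase (b, d)))) σ) :
    ∃ s t : ℕ, 1 ≤ s ∧ t ≤ n ∧
      ((s ≤ a ∧ b ≤ t ∧ t < c) ∨ (b < s ∧ s ≤ c ∧ d ≤ t)) ∧ RInt ω s t = RInt σ s t := by
  rw [lpLE] at hfail
  push_neg at hfail
  obtain ⟨s, t, hs1, hst, htn, hgt⟩ := hfail
  have hab_not : (a, b) ∉ ω := by
    intro hmem
    have := arc_unique hω hmem hac (Or.inl rfl)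
    simp only [Prod.mk.injEq] at this
    omega
  have hcd_not : (c, d) ∉ ω := by
    intro hmem
    have := arc_unique hω hmem hac (Or.inr (Or.inl rfl))
    simp only [Prod.mk.injEq] at this
    omega
  have hbd_er : (b, d) ∈ ω.erase (a, c) := by
    rw [Finset.mem_erase]
    exact ⟨by simp only [ne_eq, Prod.mk.injEq]; omega, hbd⟩
  have hsum : RInt (insert (a, b) (insert (c, d) ((ω.erase (a, c)).erase (b, d)))) s t
        + (if s ≤ a ∧ c ≤ t then 1 else 0) + (if s ≤ b ∧ d ≤ t then 1 else 0)
      = RInt ω s t + (if s ≤ a ∧ b ≤ t then 1 else 0)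
        + (if s ≤ c ∧ d ≤ t then 1 else 0) := by
    rw [RInt_eq_sum, RInt_eq_sum]
    rw [Finset.sum_insert (by
      simp only [Finset.mem_insert, Prod.mk.injEq, not_or]
      refine ⟨by omega, fun hmem => hab_not ?_⟩
      exact Finset.mem_of_mem_erase (Finset.mem_of_mem_erase hmem))]
    rw [Finset.sum_insert (by
      intro hmem
      exact hcd_not (Finset.mem_of_mem_erase (Finset.mem_of_mem_erase hmem)))]
    have e1 := Finset.sum_erase_add (ω.erase (a, c))
      (fun p => if s ≤ p.1 ∧ p.2 ≤ t then 1 else 0) hbd_er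
    have e2 := Finset.sum_erase_add ω
      (fun p => if s ≤ p.1 ∧ p.2 ≤ t then 1 else 0) hac
    dsimp only at e1 e2 ⊢
    omega
  have hωσ : RInt ω s t ≤ RInt σ s t := hle s t hs1 hst htn
  refine ⟨s, t, hs1, htn, ?_⟩
  split_ifs at hsum <;> omega

/-- Witness extraction for a failing type-(b) nesting predecessor. -/
lemma witness_b2 {n a b c d : ℕ} {σ ω : Finset (ℕ × ℕ)} (hω : IsLinkPattern n ω)
    (hac : (a, c) ∈ ω) (hbd : (b, d) ∈ ω) (h1 : a < b) (h2 : b < c) (h3 : c < d)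
    (hle : lpLE n ω σ)
    (hfail : ¬ lpLE n (insert (a, d) (insert (b, c) ((ω.erase (a, c)).erase (b, d)))) σ) :
    ∃ s t : ℕ, 1 ≤ s ∧ t ≤ n ∧
      a < s ∧ s ≤ b ∧ c ≤ t ∧ t < d ∧ RInt ω s t = RInt σ s t := by
  rw [lpLE] at hfail
  push_neg at hfail
  obtain ⟨s, t, hs1, hst, htn, hgt⟩ := hfail
  have had_not : (a, d) ∉ ω := by
    intro hmem
    have := arc_unique hω hmem hac (Or.inl rfl)
    simp only [Prod.mk.injEq] at this
    omega
  have hbc_not : (b, c) ∉ ω := by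
    intro hmem
    have := arc_unique hω hmem hbd (Or.inl rfl)
    simp only [Prod.mk.injEq] at this
    omega
  have hbd_er : (b, d) ∈ ω.erase (a, c) := by
    rw [Finset.mem_erase]
    exact ⟨by simp only [ne_eq, Prod.mk.injEq]; omega, hbd⟩
  have hsum : RInt (insert (a, d) (insert (b, c) ((ω.erase (a, c)).erase (b, d)))) s t
        + (if s ≤ a ∧ c ≤ t then 1 else 0) + (if s ≤ b ∧ d ≤ t then 1 else 0)
      = RInt ω s t + (if s ≤ a ∧ d ≤ t then 1 else 0)
        + (if s ≤ b ∧ c ≤ t then 1 else 0) := by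
    rw [RInt_eq_sum, RInt_eq_sum]
    rw [Finset.sum_insert (by
      simp only [Finset.mem_insert, Prod.mk.injEq, not_or]
      refine ⟨by omega, fun hmem => had_not ?_⟩
      exact Finset.mem_of_mem_erase (Finset.mem_of_mem_erase hmem))]
    rw [Finset.sum_insert (by
      intro hmem
      exact hbc_not (Finset.mem_of_mem_erase (Finset.mem_of_mem_erase hmem)))]
    have e1 := Finset.sum_erase_add (ω.erase (a, c))
      (fun p => if s ≤ p.1 ∧ p.2 ≤ t then 1 else 0) hbd_er
    have e2 := Finset.sum_erase_add ω
      (fun p => if s ≤ p.1 ∧ p.2 ≤ t then 1 else 0) hac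
    dsimp only at e1 e2 ⊢
    omega
  have hωσ : RInt ω s t ≤ RInt σ s t := hle s t hs1 hst htn
  refine ⟨s, t, hs1, htn, ?_⟩
  split_ifs at hsum <;> omega

/-- for maximal `σ` and `ω ≤ σ`, `ω ≠ σ`, from every pair of predecessors of
`ω` arising from the same elementary move data, at least one is `≤ σ`. -/
theorem one_predecessor_in_graph (n k : ℕ) (hnk : 2 * k ≤ n) (σ ω : Finset (ℕ × ℕ))
    (hσ : IsMaximal n σ) (hσk : σ.card = k)
    (hω : IsLinkPattern n ω) (hωk : ω.card = k) (hle : lpLE n ω σ) (hne : ω ≠ σ) :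
    (∀ a b f : ℕ, (a, b) ∈ ω → f ∈ fixedPts n ω → a < f → f < b →
      lpLE n (insert (a, f) (ω.erase (a, b))) σ ∨
      lpLE n (insert (f, b) (ω.erase (a, b))) σ) ∧
    (∀ a b c d : ℕ, (a, c) ∈ ω → (b, d) ∈ ω → a < b → b < c → c < d →
      lpLE n (insert (a, b) (insert (c, d) ((ω.erase (a, c)).erase (b, d)))) σ ∨
      lpLE n (insert (a, d) (insert (b, c) ((ω.erase (a, c)).erase (b, d)))) σ) := by
  have hRle : ∀ s t : ℕ, 1 ≤ s → t ≤ n → RInt ω s t ≤ RInt σ s t := by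
    intro s t hs ht
    by_cases h : s < t
    · exact hle s t hs h ht
    · rw [RInt_zero hω h, RInt_zero hσ.1 h]
  constructor
  · intro a b f habω hf haf hfb
    by_contra hcon
    push_neg at hcon
    obtain ⟨hfail1, hfail2⟩ := hcon
    have hffree := fixedPts_not_endpoint hf
    obtain ⟨s, t, hs1, htn, hsa, hft, htb, heqI⟩ :=
      witness_a hσ.1 hω habω hffree haf hfb hle hfail1
    obtain ⟨s2, t2, hs21, ht2n, has2, hs2f, hbt2, heqJ⟩ :=
      witness_a2 habω hffree haf hfb hle hfail2
    exact master hσ.1 hσ.2.1 hσ.2.2 hω hs1 ht2n hsa has2 hs2f hft htb hbt2 habω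
      (fun p hp => ⟨fun h => absurd h ((hffree p hp).1),
        fun h => absurd h ((hffree p hp).2)⟩) hRle heqI heqJ
  · intro a b c d hac hbd h1 h2 h3
    by_contra hcon
    push_neg at hcon
    obtain ⟨hfail1, hfail2⟩ := hcon
    obtain ⟨s, t, hs1, htn, hcases, heqI⟩ := witness_b1 hω hac hbd h1 h2 h3 hle hfail1
    obtain ⟨s2, t2, hs21, ht2n, has2, hs2b, hct2, ht2d, heqJ⟩ :=
      witness_b2 hω hac hbd h1 h2 h3 hle hfail2
    rcases hcases with ⟨hsa, hbt, htc⟩ | ⟨hbs, hsc, hdt⟩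
    · refine master hσ.1 hσ.2.1 hσ.2.2 hω hs1 ht2n hsa has2 hs2b hbt htc hct2 hac
        ?_ hRle heqI heqJ
      intro p hp
      constructor
      · intro hpb
        have hpeq : p = (b, d) := arc_unique hω hp hbd (Or.inl (by rw [hpb]))
        rw [hpeq]
        dsimp only
        omega
      · intro hpb
        have hpeq : p = (b, d) := arc_unique hω hp hbd (Or.inr (Or.inr (Or.inl (by rw [hpb]))))
        exfalso
        rw [hpeq] at hpb
        dsimp only at hpb
        omega
    · refine master hσ.1 hσ.2.1 hσ.2.2 hω hs21 htn hs2b hbs hsc hct2 ht2d hdt hbd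
        ?_ hRle heqJ heqI
      intro p hp
      constructor
      · intro hpc
        have hpeq : p = (a, c) := arc_unique hω hp hac (Or.inr (Or.inl (by rw [hpc])))
        exfalso
        rw [hpeq] at hpc
        dsimp only at hpc
        omega
      · intro hpc
        have hpeq : p = (a, c) := arc_unique hω hp hac (Or.inr (Or.inr (Or.inr (by rw [hpc]))))
        rw [hpeq]
        dsimp only
        omega

end LinkPatterns
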